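/- arXiv:1605.07447 — 2 statements merged into one kernel-verified Lean document; each statement's English description precedes it below -/
import Mathlib

section
/- Let $A$ be a commutative ring, $\mathfrak{a} \subseteq A$ a finitely generated ideal, and $M$ an $A$-module. Then the $\mathfrak{a}$-adic completion functor is idempotent on $M$ in the following sense: the natural map $\Lambda_{\mathfrak{a}}(\tau_M) : \Lambda_{\mathfrak{a}}(M) \to \Lambda_{\mathfrak{a}}(\Lambda_{\mathfrak{a}}(M))$, induced by the completion map $\tau_M : M \to \Lambda_{\mathfrak{a}}(M)$, is an isomorphism. -/
open Submodule AdicCompletion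

section Aux

variable {A : Type*} [CommRing A] (I : Ideal A)
variable {M : Type*} [AddCommGroup M] [Module A M]

/-- In the quotient `M ⧸ (I^n • ⊤)`, the submodule `I^n • ⊤` is trivial. -/
lemma aux_smul_top_quot_eq_bot (n : ℕ) :
    (I ^ n • ⊤ : Submodule A (M ⧸ (I ^ n • ⊤ : Submodule A M))) = ⊥ := by
  have htop : (⊤ : Submodule A (M ⧸ (I ^ n • ⊤ : Submodule A M))) =
      Submodule.map (Submodule.mkQ (I ^ n • ⊤ : Submodule A M)) ⊤ := by
    rw [Submodule.map_top, Submodule.range_mkQ]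
  rw [htop, ← Submodule.map_smul'', eq_bot_iff]
  rintro x hx
  obtain ⟨y, hy, rfl⟩ := hx
  simpa [Submodule.Quotient.mk_eq_zero] using hy

/-- If `z` lies in `I^n • ⊤` of the adic completion, then its `n`-th component vanishes. -/
lemma aux_val_eq_zero_of_mem_smul {n : ℕ} {z : AdicCompletion I M}
    (hz : z ∈ (I ^ n • ⊤ : Submodule A (AdicCompletion I M))) : z.val n = 0 := by
  have h : z.val n ∈ Submodule.map (AdicCompletion.eval I M n)
      (I ^ n • ⊤ : Submodule A (AdicCompletion I M)) :=
    Submodule.mem_map_of_mem hz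
  rw [Submodule.map_smul''] at h
  have h2 : z.val n ∈ (I ^ n • ⊤ : Submodule A (M ⧸ (I ^ n • ⊤ : Submodule A M))) :=
    Submodule.smul_mono le_rfl le_top h
  rw [aux_smul_top_quot_eq_bot] at h2
  simpa using h2

/-- Decomposition of elements of `(span s) • N` as sums over `s` with coefficients in `N`. -/
lemma aux_decomp (s : Finset A) (N : Submodule A M) {x : M}
    (hx : x ∈ (Submodule.span A (s : Set A)) • N) :
    ∃ z : A → M, (∀ a, z a ∈ N) ∧ x = ∑ a ∈ s, a • z a := by
  refine Submodule.smul_induction_on hx ?_ ?_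
  · intro r hr y hy
    obtain ⟨f, hf⟩ := mem_span_finset.mp hr
    refine ⟨fun a ↦ (f a) • y, fun a ↦ Submodule.smul_mem _ _ hy, ?_⟩
    calc r • y = (∑ a ∈ s, f a • a) • y := by rw [hf.2]
    _ = ∑ a ∈ s, a • (f a • y) := by
        rw [Finset.sum_smul]
        refine Finset.sum_congr rfl fun a _ ↦ ?_
        rw [smul_eq_mul, mul_comm, mul_smul]
  · rintro x y ⟨z₁, hz₁, rfl⟩ ⟨z₂, hz₂, rfl⟩
    exact ⟨fun a ↦ z₁ a + z₂ a, fun a ↦ Submodule.add_mem _ (hz₁ a) (hz₂ a),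
      by rw [← Finset.sum_add_distrib]; exact Finset.sum_congr rfl fun a _ ↦ (smul_add a _ _).symm⟩

/-- Key lemma (Stacks 05GG): for a finitely generated ideal `I`, the kernel of the `n`-th
evaluation map on the adic completion is contained in `I^n • ⊤`. -/
lemma aux_mem_smul_of_val_eq_zero (hI : I.FG) (n : ℕ) (z : AdicCompletion I M)
    (hz : z.val n = 0) : z ∈ (I ^ n • ⊤ : Submodule A (AdicCompletion I M)) := by
  obtain ⟨c₀, rfl⟩ := AdicCompletion.mk_surjective I M z
  -- `c₀ n ∈ I^n • ⊤`
  have hc₀n : c₀ n ∈ (I ^ n • ⊤ : Submodule A M) := by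
    have : Submodule.mkQ (I ^ n • ⊤ : Submodule A M) (c₀ n) = 0 := hz
    simpa [Submodule.Quotient.mk_eq_zero] using this
  -- normalized Cauchy sequence `c`
  set c : ℕ → M := fun m ↦ c₀ (max m n) - c₀ n with hc_def
  have hc_cauchy : ∀ m, c m ≡ c (m + 1) [SMOD (I ^ m • ⊤ : Submodule A M)] := by
    intro m
    rw [SModEq.sub_mem]
    rcases le_or_gt n (m + 1) with h | h
    · rcases le_or_gt n m with h' | h'
      · have := c₀.property (show m ≤ m + 1 by omega)
        rw [SModEq.sub_mem] at this
        simpa [hc_def, max_eq_left h, max_eq_left h', sub_sub_sub_cancel_right] using this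
      · have hm : m + 1 = n := by omega
        have := c₀.property (show m ≤ n by omega)
        rw [SModEq.sub_mem] at this
        simpa [hc_def, max_eq_right (show m ≤ n by omega), hm] using this
    · have h1 : max m n = n := max_eq_right (by omega)
      have h2 : max (m + 1) n = n := max_eq_right (by omega)
      simp [hc_def, h1, h2]
  have hcN : ∀ m, c m ∈ (I ^ n • ⊤ : Submodule A M) := by
    intro m
    have := c₀.property (le_max_right m n)
    rw [SModEq.sub_mem] at this
    have h2 := Submodule.neg_mem _ this
    simpa [hc_def, neg_sub] using h2
  have hc0 : c 0 = 0 := by simp [hc_def]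
  -- differences decompose
  have hd : ∀ m, c (m + 1) - c m ∈ I ^ n • ((I ^ (m - n) • ⊤ : Submodule A M)) := by
    intro m
    rcases le_or_gt n m with h | h
    · have hpow : I ^ m = I ^ n * I ^ (m - n) := by rw [← pow_add, Nat.add_sub_cancel' h]
      have h1 : c (m + 1) - c m ∈ (I ^ m • ⊤ : Submodule A M) := by
        have := hc_cauchy m; rw [SModEq.sub_mem] at this
        simpa using Submodule.neg_mem _ this
      rw [hpow, ← smul_eq_mul, Submodule.smul_assoc] at h1
      exact h1
    · have h1 : max (m + 1) n = n := max_eq_right (by omega)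
      have h2 : max m n = n := max_eq_right (by omega)
      have : c (m + 1) - c m = 0 := by simp [hc_def, h1, h2]
      rw [this]; exact Submodule.zero_mem _
  -- generators of `I^n`
  obtain ⟨s, hs⟩ := Submodule.FG.pow hI n
  have hdecomp : ∀ m, ∃ z : A → M, (∀ a, z a ∈ (I ^ (m - n) • ⊤ : Submodule A M)) ∧
      c (m + 1) - c m = ∑ a ∈ s, a • z a := by
    intro m
    refine aux_decomp s _ ?_
    show _ ∈ (Submodule.span A (s : Set A)) • _
    rw [hs]; exact hd m
  choose zf hzf1 hzf2 using hdecomp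
  -- partial sums, shifted by `n`
  set u : A → ℕ → M := fun a m ↦ ∑ k ∈ Finset.range (m + n), zf k a with hu_def
  have hu_cauchy : ∀ a m, u a m ≡ u a (m + 1) [SMOD (I ^ m • ⊤ : Submodule A M)] := by
    intro a m
    rw [SModEq.sub_mem]
    have : u a (m + 1) - u a m = zf (m + n) a := by
      simp [hu_def, show m + 1 + n = (m + n) + 1 by omega, Finset.sum_range_succ]
    have hmem : zf (m + n) a ∈ (I ^ m • ⊤ : Submodule A M) := by
      have := hzf1 (m + n) a
      rwa [Nat.add_sub_cancel] at this
    rw [← neg_sub, this]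
    exact Submodule.neg_mem _ hmem
  set y : A → AdicCompletion I M := fun a ↦
    AdicCompletion.mk I M (AdicCauchySequence.mk I M (u a) (hu_cauchy a)) with hy_def
  -- telescoping identity
  have hsum : ∀ m, ∑ a ∈ s, a • u a m = c (m + n) := by
    intro m
    calc ∑ a ∈ s, a • u a m = ∑ a ∈ s, ∑ k ∈ Finset.range (m + n), a • zf k a := by
          refine Finset.sum_congr rfl fun a _ ↦ ?_
          rw [hu_def]; exact Finset.smul_sum
    _ = ∑ k ∈ Finset.range (m + n), ∑ a ∈ s, a • zf k a := Finset.sum_comm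
    _ = ∑ k ∈ Finset.range (m + n), (c (k + 1) - c k) := by
          exact Finset.sum_congr rfl fun k _ ↦ (hzf2 k).symm
    _ = c (m + n) - c 0 := Finset.sum_range_sub c (m + n)
    _ = c (m + n) := by rw [hc0, sub_zero]
  -- the Cauchy sequence for `c`
  set cSeq : AdicCauchySequence I M := AdicCauchySequence.mk I M c hc_cauchy with hcSeq_def
  have hmkc : AdicCompletion.mk I M cSeq = ∑ a ∈ s, a • y a := by
    apply AdicCompletion.ext
    intro m
    rw [AdicCompletion.val_sum_apply]
    have : ∀ a ∈ s, (a • y a).val m =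
        Submodule.mkQ (I ^ m • ⊤ : Submodule A M) (a • u a m) := by
      intro a _
      rw [AdicCompletion.val_smul_apply, hy_def]
      simp [AdicCompletion.mk]
      rfl
    rw [Finset.sum_congr rfl this, ← map_sum, hsum]
    show Submodule.mkQ _ (c m) = Submodule.mkQ _ (c (m + n))
    have := (AdicCauchySequence.mk I M c hc_cauchy).property (show m ≤ m + n by omega)
    rw [SModEq.def] at this
    simpa [AdicCauchySequence.mk] using this
  have hmkc_mem : AdicCompletion.mk I M cSeq ∈
      (I ^ n • ⊤ : Submodule A (AdicCompletion I M)) := by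
    rw [hmkc]
    refine Submodule.sum_mem _ fun a ha ↦ ?_
    have : a ∈ I ^ n := by rw [← hs]; exact Ideal.subset_span ha
    exact Submodule.smul_mem_smul this Submodule.mem_top
  -- `mk c₀ = mk cSeq + of (c₀ n)`
  have hsplit : AdicCompletion.mk I M c₀ =
      AdicCompletion.mk I M cSeq + AdicCompletion.of I M (c₀ n) := by
    apply AdicCompletion.ext
    intro m
    rw [AdicCompletion.val_add_apply]
    show Submodule.mkQ _ (c₀ m) = Submodule.mkQ _ (c m) + Submodule.mkQ _ (c₀ n)
    rw [← map_add]
    have : c m + c₀ n = c₀ (max m n) := by show c₀ (max m n) - c₀ n + c₀ n = c₀ (max m n); abel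
    rw [this]
    have := c₀.property (le_max_left m n)
    rw [SModEq.def] at this
    exact this
  rw [hsplit]
  refine Submodule.add_mem _ hmkc_mem ?_
  have : AdicCompletion.of I M (c₀ n) ∈ Submodule.map (AdicCompletion.of I M)
      (I ^ n • ⊤ : Submodule A M) := Submodule.mem_map_of_mem hc₀n
  rw [Submodule.map_smul''] at this
  exact Submodule.smul_mono le_rfl le_top this

end Aux

/-- For a finitely generated ideal `𝔞` of a commutative ring `A` and any `A`-module `M`,
adic completion is idempotent: the map `Λ_𝔞(τ_M) : Λ_𝔞(M) → Λ_𝔞(Λ_𝔞(M))` induced by the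
completion map `τ_M : M → Λ_𝔞(M)` is an isomorphism. -/
theorem adicCompletion_idempotent {A : Type*} [CommRing A] (𝔞 : Ideal A) (h𝔞 : 𝔞.FG)
    (M : Type*) [AddCommGroup M] [Module A M] :
    Function.Bijective (AdicCompletion.map 𝔞 (AdicCompletion.of 𝔞 M)) := by
  constructor
  · -- injectivity (holds without finite generation)
    intro x y h
    apply AdicCompletion.ext
    intro n
    obtain ⟨ξ, hξ⟩ := Submodule.Quotient.mk_surjective (𝔞 ^ n • ⊤ : Submodule A M) (x.val n)
    obtain ⟨η, hη⟩ := Submodule.Quotient.mk_surjective (𝔞 ^ n • ⊤ : Submodule A M) (y.val n)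
    have hmaps : (AdicCompletion.map 𝔞 (AdicCompletion.of 𝔞 M) x).val n =
        (AdicCompletion.map 𝔞 (AdicCompletion.of 𝔞 M) y).val n := by rw [h]
    rw [AdicCompletion.map_val_apply, AdicCompletion.map_val_apply, ← hξ, ← hη,
      LinearMap.reduceModIdeal_apply, LinearMap.reduceModIdeal_apply] at hmaps
    rw [Submodule.Quotient.eq] at hmaps
    have : AdicCompletion.of 𝔞 M ξ - AdicCompletion.of 𝔞 M η =
        AdicCompletion.of 𝔞 M (ξ - η) := by rw [map_sub]
    rw [this] at hmaps
    have hval := aux_val_eq_zero_of_mem_smul 𝔞 hmaps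
    have : (AdicCompletion.of 𝔞 M (ξ - η)).val n =
        Submodule.mkQ (𝔞 ^ n • ⊤ : Submodule A M) (ξ - η) := rfl
    rw [this] at hval
    rw [← hξ, ← hη, Submodule.Quotient.eq]
    rwa [Submodule.mkQ_apply, Submodule.Quotient.mk_eq_zero] at hval
  · -- surjectivity (needs finite generation)
    intro yy
    obtain ⟨a, rfl⟩ := AdicCompletion.mk_surjective 𝔞 (AdicCompletion 𝔞 M) yy
    -- diagonal element
    have hcompat : ∀ {m n : ℕ} (hmn : m ≤ n),
        AdicCompletion.transitionMap 𝔞 M hmn ((a n).val n) = (a m).val m := by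
      intro m n hmn
      have h1 : AdicCompletion.transitionMap 𝔞 M hmn ((a n).val n) = (a n).val m :=
        (a n).property hmn
      have h2 : (a n).val m = (a m).val m := by
        have := a.property hmn
        rw [SModEq.sub_mem] at this
        have hval := aux_val_eq_zero_of_mem_smul 𝔞 this
        rw [AdicCompletion.val_sub_apply, sub_eq_zero] at hval
        exact hval.symm
      rw [h1, h2]
    set x : AdicCompletion 𝔞 M := ⟨fun n ↦ (a n).val n, fun hmn ↦ hcompat hmn⟩ with hx_def
    refine ⟨x, ?_⟩
    apply AdicCompletion.ext
    intro n
    obtain ⟨ξ, hξ⟩ := Submodule.Quotient.mk_surjective (𝔞 ^ n • ⊤ : Submodule A M) (x.val n)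
    rw [AdicCompletion.map_val_apply, ← hξ, LinearMap.reduceModIdeal_apply]
    show _ = Submodule.mkQ _ (a n)
    rw [Submodule.mkQ_apply, Submodule.Quotient.eq]
    apply aux_mem_smul_of_val_eq_zero 𝔞 h𝔞 n
    rw [AdicCompletion.val_sub_apply, sub_eq_zero]
    show (AdicCompletion.of 𝔞 M ξ).val n = (a n).val n
    have : (AdicCompletion.of 𝔞 M ξ).val n = Submodule.mkQ (𝔞 ^ n • ⊤ : Submodule A M) ξ := rfl
    rw [this, Submodule.mkQ_apply, hξ]
end

section
/- Let $A$ be a commutative noetherian ring, $\mathfrak{a} \subseteq A$ an ideal, and $I$ an injective $A$-module. Then the $\mathfrak{a}$-torsion submodule $\Gamma_{\mathfrak{a}}(I) = \{x \in I : \mathfrak{a}^n x = 0 \text{ for some } n\}$ is again an injective $A$-module. -/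
universe u v

/-- The `𝔞`-torsion submodule `Γ_𝔞(M)`: elements annihilated by some power of `𝔞`. -/
def torsionSubmodule {A : Type*} [CommRing A] (𝔞 : Ideal A) (M : Type*) [AddCommGroup M]
    [Module A M] : Submodule A M :=
  ⨆ n : ℕ, Submodule.torsionBySet A M ((𝔞 ^ n : Ideal A) : Set A)

section Aux

variable {A : Type u} [CommRing A] {M : Type v} [AddCommGroup M] [Module A M]

lemma torsionBySet_pow_mono (𝔞 : Ideal A) :
    Monotone (fun n : ℕ => Submodule.torsionBySet A M ((𝔞 ^ n : Ideal A) : Set A)) := by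
  intro m n h x hx
  rw [Submodule.mem_torsionBySet_iff] at hx ⊢
  rintro ⟨a, ha⟩
  exact hx ⟨a, Ideal.pow_le_pow_right h ha⟩

lemma mem_torsionSubmodule_iff (𝔞 : Ideal A) (x : M) :
    x ∈ torsionSubmodule 𝔞 M ↔
      ∃ n : ℕ, x ∈ Submodule.torsionBySet A M ((𝔞 ^ n : Ideal A) : Set A) :=
  Submodule.mem_iSup_of_directed _ (torsionBySet_pow_mono 𝔞).directed_le

/-- Baer's criterion for the torsion submodule, given Baer for the ambient module. -/
theorem baer_torsion [IsNoetherianRing A] (𝔞 : Ideal A)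
    (hB : Module.Baer A M) : Module.Baer A (torsionSubmodule 𝔞 M) := by
  classical
  intro W φ
  let Γ : Submodule A M := torsionSubmodule 𝔞 M
  set f : W →ₗ[A] M := Γ.subtype ∘ₗ φ with hf
  -- Step 1 : the range of `f` is killed by some power of `𝔞`.
  have hfg : (LinearMap.range f).FG := by
    rw [LinearMap.range_eq_map]
    exact ((Submodule.fg_top (W : Submodule A A)).mpr (IsNoetherian.noetherian W)).map f
  have hle : LinearMap.range f ≤ ⨆ n : ℕ, Submodule.torsionBySet A M ((𝔞 ^ n : Ideal A) : Set A) := by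
    rintro - ⟨x, rfl⟩
    exact (φ x).2
  obtain ⟨s, hs⟩ := CompleteLattice.IsCompactElement.exists_finset_of_le_iSup _ ((Submodule.fg_iff_compact _).mp hfg) (fun n : ℕ => Submodule.torsionBySet A M ((𝔞 ^ n : Ideal A) : Set A)) hle
  set n := s.sup id with hn
  have hrange : LinearMap.range f ≤ Submodule.torsionBySet A M ((𝔞 ^ n : Ideal A) : Set A) := by
    refine hs.trans (iSup₂_le fun i hi => torsionBySet_pow_mono 𝔞 ?_)
    exact Finset.le_sup (f := id) hi
  -- Step 2 : Artin–Rees.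
  obtain ⟨k, hk⟩ := Ideal.exists_pow_inf_eq_pow_smul 𝔞 (W : Submodule A A)
  set m := n + k with hm
  have hAR : 𝔞 ^ m ⊓ W ≤ 𝔞 ^ n • (W : Submodule A A) := by
    have h1 := hk m (Nat.le_add_left k n)
    have h2 : ∀ j : ℕ, (𝔞 ^ j • (⊤ : Submodule A A)) = 𝔞 ^ j := by
      intro j; rw [Ideal.smul_eq_mul, Ideal.mul_top]
    rw [h2] at h1
    rw [h1, hm, Nat.add_sub_cancel]
    exact Submodule.smul_mono le_rfl inf_le_right
  -- Step 3 : `f` vanishes on `𝔞 ^ m ⊓ W`.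
  have hker' : (𝔞 ^ n • ⊤ : Submodule A W) ≤ LinearMap.ker f := by
    intro z hz
    refine Submodule.smul_induction_on hz (fun r hr w _ => ?_) (fun a b ha hb => ?_)
    · rw [LinearMap.mem_ker, map_smul]
      have := hrange ⟨w, rfl⟩
      rw [Submodule.mem_torsionBySet_iff] at this
      exact this ⟨r, hr⟩
    · exact Submodule.add_mem _ ha hb
  have hker : ∀ (x : A) (hxW : x ∈ W), x ∈ 𝔞 ^ m → f ⟨x, hxW⟩ = 0 := by
    intro x hxW hxm
    have h1 : x ∈ 𝔞 ^ n • (W : Submodule A A) := hAR ⟨hxm, hxW⟩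
    have h2 : Submodule.map W.subtype (𝔞 ^ n • ⊤ : Submodule A W)
        = 𝔞 ^ n • (W : Submodule A A) := by
      rw [Submodule.map_smul'', Submodule.map_top, Submodule.range_subtype]
    rw [← h2] at h1
    obtain ⟨z, hz, hzx⟩ := h1
    have : (⟨x, hxW⟩ : W) = z := Subtype.ext hzx.symm
    rw [this]
    exact hker' hz
  -- Step 4 : extend `f` to `W ⊔ 𝔞 ^ m`, vanishing on `𝔞 ^ m`.
  set K := 𝔞 ^ m with hK
  set N₀ : Submodule A W := Submodule.comap W.subtype (W : Submodule A A) ⊓ Submodule.comap W.subtype K with hN₀def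
  have hN₀ : N₀ ≤ LinearMap.ker f := by
    rintro ⟨z, hzW⟩ hz
    exact LinearMap.mem_ker.mpr (hker z hzW hz.2)
  set f₁ : (W ⧸ N₀) →ₗ[A] M := Submodule.liftQ N₀ f hN₀ with hf₁
  set e := LinearMap.quotientInfEquivSupQuotient (W : Submodule A A) K with he
  set f' : ↥((W : Submodule A A) ⊔ K) →ₗ[A] M :=
    f₁ ∘ₗ (e.symm : _ →ₗ[A] _) ∘ₗ (Submodule.comap ((W : Submodule A A) ⊔ K).subtype K).mkQ
    with hf'
  have hP1 : ∀ (x : A) (hx : x ∈ W),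
      f' ⟨x, Submodule.mem_sup_left hx⟩ = f ⟨x, hx⟩ := by
    intro x hx
    show f₁ (e.symm (Submodule.Quotient.mk ⟨x, Submodule.mem_sup_left hx⟩)) = f ⟨x, hx⟩
    rw [LinearMap.quotientInfEquivSupQuotient_symm_apply_left _ _ _ hx]
    exact Submodule.liftQ_apply _ _ _
  have hP2 : ∀ (x : A) (hx : x ∈ K),
      f' ⟨x, Submodule.mem_sup_right hx⟩ = 0 := by
    intro x hx
    have hz : (Submodule.Quotient.mk (⟨x, Submodule.mem_sup_right hx⟩ :
        ↥((W : Submodule A A) ⊔ K)) :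
        ↥((W : Submodule A A) ⊔ K) ⧸ Submodule.comap ((W : Submodule A A) ⊔ K).subtype K) = 0 :=
      (Submodule.Quotient.mk_eq_zero _).mpr hx
    show f₁ (e.symm (Submodule.Quotient.mk ⟨x, Submodule.mem_sup_right hx⟩)) = 0
    rw [hz, map_zero, map_zero]
  -- Step 5 : use Baer for `M`.
  obtain ⟨g, hg⟩ := hB ((W : Submodule A A) ⊔ K) f'
  -- Step 6 : `g` lands in `Γ`.
  have hmemΓ : ∀ a : A, g a ∈ Γ := by
    intro a
    show g a ∈ torsionSubmodule 𝔞 M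
    rw [mem_torsionSubmodule_iff]
    refine ⟨m, (Submodule.mem_torsionBySet_iff _ _).mpr ?_⟩
    rintro ⟨b, hb⟩
    have hba : b * a ∈ K := Ideal.mul_mem_right a _ hb
    have h1 : b • g a = g (b * a) := by
      rw [← map_smul, smul_eq_mul]
    rw [h1, hg (b * a) (Submodule.mem_sup_right hba), hP2 (b * a) hba]
  -- Step 7 : conclude.
  refine ⟨LinearMap.codRestrict Γ g hmemΓ, fun x hx => Subtype.ext ?_⟩
  show g x = (φ ⟨x, hx⟩ : M)
  rw [hg x (Submodule.mem_sup_left hx), hP1 x hx]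
  rfl

end Aux

theorem torsion_injective_of_injective_aux {A : Type u} [CommRing A] [IsNoetherianRing A]
    (𝔞 : Ideal A) (I : Type v) [AddCommGroup I] [Module A I]
    (hI : Module.Injective A I) :
    Module.Injective A (torsionSubmodule 𝔞 I) := by
  classical
  constructor
  intro X Y _ _ _ _ fXY hf g
  set c : Ideal A := Module.annihilator A Y ⊓ Module.annihilator A I with hc
  have htY : Module.IsTorsionBySet A Y (c : Set A) := fun y a =>
    Module.mem_annihilator.mp (Submodule.mem_inf.mp a.2).1 y
  have htI : Module.IsTorsionBySet A I (c : Set A) := fun i a =>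
    Module.mem_annihilator.mp (Submodule.mem_inf.mp a.2).2 i
  have htX : Module.IsTorsionBySet A X (c : Set A) := fun x a => by
    apply hf
    rw [map_smul, map_zero]
    exact Module.mem_annihilator.mp (Submodule.mem_inf.mp a.2).1 (fXY x)
  letI mY : Module (A ⧸ c) Y := htY.module
  letI mX : Module (A ⧸ c) X := htX.module
  letI mI : Module (A ⧸ c) I := htI.module
  -- `A ⧸ c` is a small ring.
  haveI hsmall : Small.{v} (A ⧸ c) := by
    refine small_of_injective (f := fun b : A ⧸ c =>
      ((fun y : Y => b • y, fun i : I => b • i) : (Y → Y) × (I → I))) ?_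
    intro b₁ b₂ h
    obtain ⟨a₁, rfl⟩ := Ideal.Quotient.mk_surjective b₁
    obtain ⟨a₂, rfl⟩ := Ideal.Quotient.mk_surjective b₂
    rw [Prod.mk.injEq] at h
    refine Ideal.Quotient.eq.mpr (Submodule.mem_inf.mpr ⟨?_, ?_⟩)
    · refine Module.mem_annihilator.mpr fun y => ?_
      have h1 : Ideal.Quotient.mk c a₁ • y = Ideal.Quotient.mk c a₂ • y := congrFun h.1 y
      rw [htY.mk_smul, htY.mk_smul] at h1
      rw [sub_smul, h1, sub_self]
    · refine Module.mem_annihilator.mpr fun i => ?_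
      have h1 : Ideal.Quotient.mk c a₁ • i = Ideal.Quotient.mk c a₂ • i := congrFun h.2 i
      rw [htI.mk_smul, htI.mk_smul] at h1
      rw [sub_smul, h1, sub_self]
  -- `I` is injective over `A ⧸ c`.
  have hInjBI : Module.Injective (A ⧸ c) I := by
    constructor
    intro X' Y' _ _ _ _ f' hf' g'
    letI mX' : Module A X' := Module.compHom X' (Ideal.Quotient.mk c)
    letI mY' : Module A Y' := Module.compHom Y' (Ideal.Quotient.mk c)
    let f'' : X' →ₗ[A] Y' :=
      { toFun := f', map_add' := map_add f',
        map_smul' := fun a x => f'.map_smul (Ideal.Quotient.mk c a) x }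
    let g'' : X' →ₗ[A] I :=
      { toFun := g', map_add' := map_add g',
        map_smul' := fun a x => g'.map_smul (Ideal.Quotient.mk c a) x }
    obtain ⟨h, hh⟩ := hI.out f'' (show Function.Injective f'' from hf') g''
    refine ⟨{ toFun := h, map_add' := map_add h, map_smul' := fun b x => ?_ },
      fun x => hh x⟩
    obtain ⟨a, rfl⟩ := Ideal.Quotient.mk_surjective b
    exact h.map_smul a x
  have hBaerBI : Module.Baer (A ⧸ c) I := Module.Baer.of_injective hInjBI
  have hBaerΓ : Module.Baer (A ⧸ c)
      (torsionSubmodule (Ideal.map (Ideal.Quotient.mk c) 𝔞) I) := baer_torsion _ hBaerBI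
  have hInjΓ := hBaerΓ.injective
  -- the two torsion submodules have the same carrier
  have hcar : ∀ x : I, x ∈ torsionSubmodule 𝔞 I ↔
      x ∈ torsionSubmodule (Ideal.map (Ideal.Quotient.mk c) 𝔞) I := by
    intro x
    rw [mem_torsionSubmodule_iff, mem_torsionSubmodule_iff]
    constructor
    · rintro ⟨n, hn⟩
      refine ⟨n, (Submodule.mem_torsionBySet_iff _ _).mpr ?_⟩
      rintro ⟨b, hb⟩
      have hb' : b ∈ Ideal.map (Ideal.Quotient.mk c) (𝔞 ^ n) := by
        rwa [Ideal.map_pow]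
      obtain ⟨a, ha, rfl⟩ :=
        (Ideal.mem_map_iff_of_surjective _ Ideal.Quotient.mk_surjective).mp hb'
      show (Ideal.Quotient.mk c a) • x = 0
      rw [htI.mk_smul]
      exact (Submodule.mem_torsionBySet_iff _ _).mp hn ⟨a, ha⟩
    · rintro ⟨n, hn⟩
      refine ⟨n, (Submodule.mem_torsionBySet_iff _ _).mpr ?_⟩
      rintro ⟨a, ha⟩
      have h1 : (Ideal.Quotient.mk c a) • x = 0 :=
        (Submodule.mem_torsionBySet_iff _ _).mp hn
          ⟨Ideal.Quotient.mk c a, by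
            rw [← Ideal.map_pow]
            exact Ideal.mem_map_of_mem _ ha⟩
      rw [htI.mk_smul] at h1
      exact h1
  -- transfer the extension problem
  let fB : X →ₗ[A ⧸ c] Y :=
    { toFun := fXY, map_add' := map_add fXY,
      map_smul' := fun b x => by
        obtain ⟨a, rfl⟩ := Ideal.Quotient.mk_surjective b
        exact fXY.map_smul a x }
  let gB : X →ₗ[A ⧸ c] (torsionSubmodule (Ideal.map (Ideal.Quotient.mk c) 𝔞) I) :=
    { toFun := fun x => ⟨(g x : I), (hcar _).mp (g x).2⟩,
      map_add' := fun x y => Subtype.ext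
        (show ((g (x + y) : I)) = (g x : I) + (g y : I) from
          congrArg Subtype.val (map_add g x y)),
      map_smul' := fun b x => by
        obtain ⟨a, rfl⟩ := Ideal.Quotient.mk_surjective b
        refine Subtype.ext ?_
        show ((g ((Ideal.Quotient.mk c a) • x) : I)) = (Ideal.Quotient.mk c a) • ((g x : I))
        rw [htX.mk_smul, htI.mk_smul]
        exact congrArg Subtype.val (g.map_smul a x) }
  obtain ⟨hB, hhB⟩ := hInjΓ.out fB (show Function.Injective fB from hf) gB
  refine ⟨{ toFun := fun y => ⟨(hB y : I), (hcar _).mpr (hB y).2⟩,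
            map_add' := fun y z => Subtype.ext
              (show ((hB (y + z) : I)) = (hB y : I) + (hB z : I) from
                congrArg Subtype.val (map_add hB y z)),
            map_smul' := fun a y => by
              refine Subtype.ext ?_
              show ((hB (a • y) : I)) = a • ((hB y : I))
              rw [← Module.IsTorsionBySet.mk_smul htY a y, ← Module.IsTorsionBySet.mk_smul htI a (((hB y : I)))]
              exact congrArg Subtype.val (hB.map_smul (Ideal.Quotient.mk c a) y) },
         fun x => by
           refine Subtype.ext ?_
           show ((hB (fXY x) : I)) = ((g x : I))
           exact congrArg Subtype.val (hhB x)⟩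

/-- Over a noetherian commutative ring, the `𝔞`-torsion submodule of an injective module is
again injective. -/
theorem torsion_injective_of_injective {A : Type*} [CommRing A] [IsNoetherianRing A]
    (𝔞 : Ideal A) (I : Type*) [AddCommGroup I] [Module A I]
    (hI : Module.Injective A I) :
    Module.Injective A (torsionSubmodule 𝔞 I) :=
  torsion_injective_of_injective_aux 𝔞 I hI
end
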